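/- For an irreducible stochastic matrix T with L = I - T, the total weight q_j of spanning converging trees to vertex j in the associated digraph equals the (j,j) cofactor of L, i.e., q_j = det(L with row j and column j deleted), and this quantity is strictly positive for every j. -/

import Mathlib

open scoped Classical
open Finset Matrix

namespace MFPT

variable {n : ℕ}

/-- The step relation of a functional subgraph: `a → b` when `F a = some b`. -/
def Step (F : Fin n → Option (Fin n)) (a b : Fin n) : Prop := F a = some b

/-- `F` is a spanning in-forest of the weighted digraph with weight matrix `w`:
every chosen arc is a genuine (loopless, positive-weight) arc and there is no directed cycle.
Each weak component of such a functional digraph is a converging tree (root = the vertex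
mapped to `none`). -/
def IsInForest (w : Matrix (Fin n) (Fin n) ℝ) (F : Fin n → Option (Fin n)) : Prop :=
  (∀ v u, F v = some u → v ≠ u ∧ 0 < w v u) ∧ ∀ v, ¬ Relation.TransGen (Step F) v v

/-- Weight of a spanning subgraph: the product of its arc weights. -/
noncomputable def forestWeight (w : Matrix (Fin n) (Fin n) ℝ) (F : Fin n → Option (Fin n)) : ℝ :=
  ∏ v, (F v).elim 1 (fun u => w v u)

/-- Number of arcs of a functional subgraph. -/
def arcCount (F : Fin n → Option (Fin n)) : ℕ :=
  (Finset.univ.filter fun v => (F v).isSome).card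

/-- Vertex `i` belongs to the tree of `F` converging to (rooted at) `j`. -/
def InTreeOf (F : Fin n → Option (Fin n)) (i j : Fin n) : Prop :=
  Relation.ReflTransGen (Step F) i j ∧ F j = none

/-- `σ_k`: total weight of spanning in-forests with `k` arcs. -/
noncomputable def sigmaW (w : Matrix (Fin n) (Fin n) ℝ) (k : ℕ) : ℝ :=
  ∑ F : Fin n → Option (Fin n),
    if IsInForest w F ∧ arcCount F = k then forestWeight w F else 0

/-- `Q_k`: the matrix whose `(i,j)` entry is the total weight of in-forests with `k` arcs
in which `i` belongs to the tree converging to `j`. -/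
noncomputable def Qmat (w : Matrix (Fin n) (Fin n) ℝ) (k : ℕ) : Matrix (Fin n) (Fin n) ℝ :=
  Matrix.of fun i j => ∑ F : Fin n → Option (Fin n),
    if IsInForest w F ∧ arcCount F = k ∧ InTreeOf F i j then forestWeight w F else 0

/-- `q_j`: total weight of spanning trees converging to `j` (in-forests with `n-1` arcs
whose unique root is `j`). -/
noncomputable def treeWeight (w : Matrix (Fin n) (Fin n) ℝ) (j : Fin n) : ℝ :=
  ∑ F : Fin n → Option (Fin n),
    if IsInForest w F ∧ arcCount F = n - 1 ∧ F j = none then forestWeight w F else 0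

/-- `f_{ij}`: total weight of 2-tree in-forests having one tree containing `i` and the other
tree converging to `j`. -/
noncomputable def fWeight (w : Matrix (Fin n) (Fin n) ℝ) (i j : Fin n) : ℝ :=
  ∑ F : Fin n → Option (Fin n),
    if IsInForest w F ∧ arcCount F = n - 2 ∧ F j = none ∧
        ¬ Relation.ReflTransGen (Step F) i j
      then forestWeight w F else 0

/-- The Laplacian matrix of the weighted digraph with weight matrix `w`. -/
noncomputable def lap (w : Matrix (Fin n) (Fin n) ℝ) : Matrix (Fin n) (Fin n) ℝ :=
  Matrix.of fun i j => if i = j then ∑ k ∈ Finset.univ.erase i, w i k else - w i j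

/-- `X` is the group inverse of `L`. -/
def IsGroupInverse (L X : Matrix (Fin n) (Fin n) ℝ) : Prop :=
  L * X * L = L ∧ X * L * X = X ∧ L * X = X * L

/-- `T` is (row-)stochastic. -/
def IsStochastic (T : Matrix (Fin n) (Fin n) ℝ) : Prop :=
  (∀ i j, 0 ≤ T i j) ∧ ∀ i, ∑ j, T i j = 1

/-- Irreducibility of `T`. -/
def IsIrreducible (T : Matrix (Fin n) (Fin n) ℝ) : Prop :=
  ∀ i j, ∃ k : ℕ, 0 < (T ^ k) i j

/-- Ergodicity (primitivity) of `T`: some power of `T` is entrywise positive. -/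
def IsErgodic (T : Matrix (Fin n) (Fin n) ℝ) : Prop :=
  ∃ N : ℕ, ∀ i j, 0 < (T ^ N) i j

/-- `π` is a stationary distribution of `T`. -/
def IsStationary (T : Matrix (Fin n) (Fin n) ℝ) (π : Fin n → ℝ) : Prop :=
  (∀ i, 0 ≤ π i) ∧ (∑ i, π i = 1) ∧ ∀ j, ∑ i, π i * T i j = π j

/-- Probability of the trajectory `p` of length `k` under transition matrix `T`. -/
noncomputable def pathProb (T : Matrix (Fin n) (Fin n) ℝ) (k : ℕ)
    (p : Fin (k + 1) → Fin n) : ℝ :=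
  ∏ t : Fin k, T (p t.castSucc) (p t.succ)

/-- `Pr(F_{ij} = k)`: probability that, starting at `i`, the chain first reaches `j`
(at a step `p ≥ 1`) exactly at time `k`. -/
noncomputable def firstPassageProb (T : Matrix (Fin n) (Fin n) ℝ) (i j : Fin n) (k : ℕ) : ℝ :=
  ∑ p : Fin (k + 1) → Fin n,
    if p 0 = i ∧ p (Fin.last k) = j ∧
        (∀ t : Fin (k + 1), t ≠ 0 → t ≠ Fin.last k → p t ≠ j)
      then pathProb T k p else 0

/-- Mean first passage time `m_{ij} = E F_{ij} = ∑ k k·Pr(F_{ij}=k)`. -/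
noncomputable def mfpt (T : Matrix (Fin n) (Fin n) ℝ) (i j : Fin n) : ℝ :=
  ∑' k : ℕ, (k : ℝ) * firstPassageProb T i j k

end MFPT


namespace MFPT

open Finset Matrix

open Finset Matrix Polynomial in
lemma det_one_sub_of_isNilpotent' {m : ℕ} (N : Matrix (Fin m) (Fin m) ℝ) (h : IsNilpotent N) :
    (1 - N).det = 1 := by
  have hu := Matrix.isUnit_charpolyRev_of_isNilpotent h
  obtain ⟨c, -, hcp⟩ := Polynomial.isUnit_iff.mp hu
  have h0 : Polynomial.eval 0 N.charpolyRev = 1 := Matrix.eval_charpolyRev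
  have hc1 : c = 1 := by rw [← hcp] at h0; simpa using h0
  have hone : N.charpolyRev = 1 := by rw [← hcp, hc1, Polynomial.C_1]
  have h2 := congrArg (Polynomial.eval 1) hone
  rw [Matrix.charpolyRev, ← Polynomial.coe_evalRingHom, RingHom.map_det] at h2
  simp only [_root_.map_one] at h2
  rw [← h2]
  congr 1
  ext i j
  rcases eq_or_ne i j with rfl | hij
  · simp [Matrix.one_apply, Matrix.map_apply, Matrix.sub_apply, Matrix.smul_apply]
  · simp [Matrix.one_apply, hij, Matrix.map_apply, Matrix.sub_apply, Matrix.smul_apply]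


def iterRel {α : Type*} (rel : α → α → Prop) : ℕ → α → α → Prop
  | 0 => Eq
  | k+1 => fun a b => ∃ c, rel a c ∧ iterRel rel k c b

noncomputable def Pmat {n : ℕ} (j : Fin (n+1)) (r : Fin n → Fin (n+1)) :
    Matrix (Fin n) (Fin n) ℝ :=
  Matrix.of fun a b => if r a = j.succAbove b then 1 else 0

def relR {n : ℕ} (j : Fin (n+1)) (r : Fin n → Fin (n+1)) (a b : Fin n) : Prop :=
  r a = j.succAbove b

lemma relR_det {n : ℕ} {j : Fin (n+1)} {r : Fin n → Fin (n+1)} {a b b' : Fin n}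
    (h : relR j r a b) (h' : relR j r a b') : b = b' :=
  Fin.succAbove_right_injective (h.symm.trans h')

lemma Pmat_pow {n : ℕ} (j : Fin (n+1)) (r : Fin n → Fin (n+1)) :
    ∀ (k : ℕ) (a b : Fin n),
      ((Pmat j r) ^ k) a b = if iterRel (relR j r) k a b then 1 else 0 := by
  intro k
  induction k with
  | zero =>
    intro a b
    rw [pow_zero, Matrix.one_apply]
    by_cases h : a = b <;> simp [iterRel, h]
  | succ k ih =>
    intro a b
    rw [pow_succ', Matrix.mul_apply]
    have key : ∀ c : Fin n, Pmat j r a c * ((Pmat j r) ^ k) c b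
        = if r a = j.succAbove c ∧ iterRel (relR j r) k c b then (1:ℝ) else 0 := by
      intro c
      rw [ih]
      simp only [Pmat, Matrix.of_apply]
      by_cases h1 : r a = j.succAbove c <;> by_cases h2 : iterRel (relR j r) k c b <;>
        simp [h1, h2]
    rw [Finset.sum_congr rfl fun c _ => key c]
    by_cases hex : ∃ c, r a = j.succAbove c ∧ iterRel (relR j r) k c b
    · obtain ⟨c₀, hc₀⟩ := hex
      rw [Finset.sum_eq_single c₀
        (fun c' _ hne => if_neg (fun hc => hne (relR_det hc.1 hc₀.1)))
        (fun h => absurd (Finset.mem_univ c₀) h), if_pos hc₀]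
      exact (if_pos (show iterRel (relR j r) (k+1) a b from ⟨c₀, hc₀⟩)).symm
    · rw [Finset.sum_eq_zero fun c _ => if_neg (fun hc => hex ⟨c, hc⟩)]
      exact (if_neg (show ¬ iterRel (relR j r) (k+1) a b from
        fun ⟨c, hc⟩ => hex ⟨c, hc⟩)).symm

lemma iterRel_chain {α : Type*} (rel : α → α → Prop) :
    ∀ (k : ℕ) (a b : α), iterRel rel k a b →
      ∃ f : ℕ → α, f 0 = a ∧ f k = b ∧ ∀ i < k, rel (f i) (f (i+1)) := by
  intro k
  induction k with
  | zero =>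
    rintro a b (rfl : a = b)
    exact ⟨fun _ => a, rfl, rfl, fun i hi => absurd hi (Nat.not_lt_zero i)⟩
  | succ k ih =>
    rintro a b ⟨c, hac, hcb⟩
    obtain ⟨f, hf0, hfk, hstep⟩ := ih c b hcb
    refine ⟨fun i => if i = 0 then a else f (i - 1), if_pos rfl, by simp [hfk], ?_⟩
    intro i hi
    rcases Nat.eq_zero_or_pos i with rfl | hpos
    · simpa [hf0] using hac
    · have h1 : i ≠ 0 := Nat.pos_iff_ne_zero.mp hpos
      have h2 : i + 1 ≠ 0 := Nat.succ_ne_zero i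
      simp only [if_neg h1, if_neg h2]
      have : i + 1 - 1 = (i - 1) + 1 := by omega
      rw [this]
      exact hstep (i - 1) (by omega)

lemma chain_rtg {α : Type*} {rel : α → α → Prop} {f : ℕ → α} {k : ℕ}
    (hf : ∀ i < k, rel (f i) (f (i+1))) :
    ∀ p q, p ≤ q → q ≤ k → Relation.ReflTransGen rel (f p) (f q) := by
  intro p q
  induction q with
  | zero => intro hpq _; interval_cases p; exact Relation.ReflTransGen.refl
  | succ q ihq =>
    intro hpq hqk
    rcases Nat.eq_or_lt_of_le hpq with rfl | hlt
    · exact Relation.ReflTransGen.refl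
    · exact Relation.ReflTransGen.tail (ihq (by omega) (by omega)) (hf q (by omega))

lemma no_iterRel_card {m : ℕ} (rel : Fin m → Fin m → Prop)
    (hA : ∀ a, ¬ Relation.TransGen rel a a) (a b : Fin m) : ¬ iterRel rel m a b := by
  intro h
  obtain ⟨f, -, -, hstep⟩ := iterRel_chain rel m a b h
  have hcard : Fintype.card (Fin m) < Fintype.card (Fin (m+1)) := by simp
  obtain ⟨i, i', hne, heq⟩ :=
    Fintype.exists_ne_map_eq_of_card_lt (fun i : Fin (m+1) => f i) hcard
  rcases Ne.lt_or_gt hne with hlt | hlt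
  all_goals
    first
    | (refine absurd ?_ (hA (f (i : ℕ)))
       have h1 : rel (f (i : ℕ)) (f ((i : ℕ) + 1)) := hstep _ (by omega)
       have h2 : Relation.ReflTransGen rel (f ((i:ℕ)+1)) (f (i' : ℕ)) :=
         chain_rtg hstep _ _ (by omega) (by omega)
       rw [heq] at *
       exact Relation.TransGen.head' h1 h2)
    | (refine absurd ?_ (hA (f (i' : ℕ)))
       have h1 : rel (f (i' : ℕ)) (f ((i' : ℕ) + 1)) := hstep _ (by omega)
       have h2 : Relation.ReflTransGen rel (f ((i':ℕ)+1)) (f (i : ℕ)) :=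
         chain_rtg hstep _ _ (by omega) (by omega)
       rw [← heq] at *
       exact Relation.TransGen.head' h1 h2)


lemma det_acyclic {n : ℕ} (j : Fin (n+1)) (r : Fin n → Fin (n+1))
    (hA : ∀ a, ¬ Relation.TransGen (relR j r) a a) :
    (1 - Pmat j r).det = 1 := by
  apply det_one_sub_of_isNilpotent'
  refine ⟨n, ?_⟩
  ext a b
  rw [Pmat_pow, if_neg (no_iterRel_card _ hA a b)]
  rfl

lemma det_cycle {n : ℕ} (j : Fin (n+1)) (r : Fin n → Fin (n+1)) (a₀ : Fin n)
    (hc : Relation.TransGen (relR j r) a₀ a₀) :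
    (1 - Pmat j r).det = 0 := by
  set rel := relR j r with hrel
  -- basic facts about the cycle set
  have hback : ∀ b, Relation.ReflTransGen rel a₀ b → Relation.ReflTransGen rel b a₀ := by
    intro b hb
    induction hb with
    | refl => exact Relation.ReflTransGen.refl
    | tail h₁ h₂ ih =>
      rcases ih.cases_head with rfl | ⟨d, hcd, hda⟩
      · obtain ⟨x, hx, hxa⟩ := Relation.TransGen.head'_iff.mp hc
        rwa [relR_det h₂ hx]
      · rwa [relR_det h₂ hcd]
  have hsucc : ∀ b, Relation.ReflTransGen rel a₀ b → ∃ c, rel b c := by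
    intro b hb
    rcases (hback b hb).cases_head with rfl | ⟨c, hbc, -⟩
    · obtain ⟨x, hx, -⟩ := Relation.TransGen.head'_iff.mp hc
      exact ⟨x, hx⟩
    · exact ⟨c, hbc⟩
  have hpred : ∀ b, Relation.ReflTransGen rel a₀ b →
      ∃ a, Relation.ReflTransGen rel a₀ a ∧ rel a b := by
    intro b hb
    rcases hb.cases_tail with rfl | ⟨c, hac, hcb⟩
    · obtain ⟨a, ha, hab⟩ := Relation.TransGen.tail'_iff.mp hc
      exact ⟨a, ha, hab⟩
    · exact ⟨c, hac, hcb⟩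
  set C : Set (Fin n) := {b | Relation.ReflTransGen rel a₀ b} with hC
  have ha₀C : a₀ ∈ C := Relation.ReflTransGen.refl
  let g : Fin n → Fin n := fun b => if h : ∃ c, rel b c then h.choose else b
  have hg : ∀ b ∈ C, rel b (g b) := by
    intro b hb
    have h := hsucc b hb
    simp only [g, dif_pos h]
    exact h.choose_spec
  have hmaps : Set.MapsTo g C C := fun b hb => Relation.ReflTransGen.tail hb (hg b hb)
  have hsurj : Set.SurjOn g C C := by
    intro b hb
    obtain ⟨a, haC, hab⟩ := hpred b hb
    exact ⟨a, haC, (relR_det (hg a haC) hab)⟩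
  have hinj : Set.InjOn g C :=
    (((Set.toFinite C).surjOn_iff_bijOn_of_mapsTo hmaps).mp hsurj).injOn
  -- the indicator vector of C is a left null vector
  have hcol : ∀ b, ∑ a ∈ Finset.univ.filter (· ∈ C), (1 - Pmat j r) a b = 0 := by
    intro b
    have expand : ∀ a, (1 - Pmat j r) a b
        = (if a = b then (1:ℝ) else 0) - (if rel a b then 1 else 0) := by
      intro a
      simp [Pmat, Matrix.one_apply, Matrix.sub_apply, hrel, relR]
    rw [Finset.sum_congr rfl fun a _ => expand a, Finset.sum_sub_distrib]
    have h1 : ∑ a ∈ Finset.univ.filter (· ∈ C), (if a = b then (1:ℝ) else 0)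
        = if b ∈ C then 1 else 0 := by
      rw [Finset.sum_ite_eq' (Finset.univ.filter (· ∈ C)) b (fun _ => (1:ℝ))]
      simp
    have h2 : ∑ a ∈ Finset.univ.filter (· ∈ C), (if rel a b then (1:ℝ) else 0)
        = if b ∈ C then 1 else 0 := by
      by_cases hb : b ∈ C
      · rw [if_pos hb]
        obtain ⟨a₁, ha₁C, ha₁⟩ := hpred b hb
        have : (Finset.univ.filter (· ∈ C)).filter (fun a => rel a b) = {a₁} := by
          ext x
          simp only [Finset.mem_filter, Finset.mem_univ, true_and, Finset.mem_singleton]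
          constructor
          · rintro ⟨hxC, hxb⟩
            exact hinj hxC ha₁C ((relR_det (hg x hxC) hxb).trans (relR_det (hg a₁ ha₁C) ha₁).symm)
          · rintro rfl
            exact ⟨ha₁C, ha₁⟩
        calc ∑ a ∈ Finset.univ.filter (· ∈ C), (if rel a b then (1:ℝ) else 0)
            = ∑ a ∈ (Finset.univ.filter (· ∈ C)).filter (fun a => rel a b), (1:ℝ) :=
              (Finset.sum_filter _ _).symm
          _ = 1 := by rw [this, Finset.sum_singleton]
      · rw [if_neg hb, Finset.sum_eq_zero]
        intro a ha
        rw [if_neg]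
        intro hab
        exact hb (Relation.ReflTransGen.tail (by simpa using ha : a ∈ C) hab)
    rw [h1, h2, sub_self]
  rw [← Matrix.exists_vecMul_eq_zero_iff]
  refine ⟨fun a => if a ∈ C then (1:ℝ) else 0, ?_, ?_⟩
  · intro h
    have := congrFun h a₀
    simp [ha₀C] at this
  · funext b
    have : (fun a => if a ∈ C then (1:ℝ) else 0) ᵥ* (1 - Pmat j r)
        = fun b => ∑ a, (if a ∈ C then (1:ℝ) else 0) * (1 - Pmat j r) a b := by
      funext x
      simp [Matrix.vecMul, dotProduct]
    rw [this]
    have := hcol b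
    rw [Finset.sum_filter] at this
    simpa [ite_mul] using this


noncomputable def cf {n : ℕ} (T : Matrix (Fin (n+1)) (Fin (n+1)) ℝ) (j : Fin (n+1))
    (a : Fin n) (l : Fin (n+1)) : ℝ :=
  if l = j.succAbove a then 0 else T (j.succAbove a) l

noncomputable def vrow {n : ℕ} (j : Fin (n+1)) (a : Fin n) (l : Fin (n+1)) : Fin n → ℝ :=
  fun b => (if a = b then 1 else 0) - (if l = j.succAbove b then 1 else 0)

lemma one_sub_Pmat_rows {n : ℕ} (j : Fin (n+1)) (r : Fin n → Fin (n+1)) :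
    (1 - Pmat j r) = fun a => vrow j a (r a) := by
  funext a b
  simp [Pmat, vrow, Matrix.one_apply, Matrix.sub_apply]

lemma rows_expand {n : ℕ} (T : Matrix (Fin (n+1)) (Fin (n+1)) ℝ)
    (hrow : ∀ i, ∑ l, T i l = 1) (j : Fin (n+1)) :
    ((1 - T).submatrix j.succAbove j.succAbove)
      = fun a => ∑ l : Fin (n+1), cf T j a l • vrow j a l := by
  funext a b
  simp only [Finset.sum_apply, Pi.smul_apply, smul_eq_mul, Matrix.submatrix_apply,
    Matrix.sub_apply, Matrix.one_apply, vrow, cf]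
  have expand : ∀ l : Fin (n+1),
      (if l = j.succAbove a then (0:ℝ) else T (j.succAbove a) l) *
        ((if a = b then (1:ℝ) else 0) - (if l = j.succAbove b then 1 else 0))
      = (if a = b then (1:ℝ) else 0) * (if l = j.succAbove a then (0:ℝ) else T (j.succAbove a) l)
        - (if l = j.succAbove b then (if l = j.succAbove a then (0:ℝ) else T (j.succAbove a) l) else 0) := by
    intro l
    by_cases h : l = j.succAbove b <;> by_cases h' : a = b <;> simp [h, h'] <;> ring
  rw [Finset.sum_congr rfl fun l _ => expand l, Finset.sum_sub_distrib, ← Finset.mul_sum,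
    Finset.sum_ite_eq' (Finset.univ : Finset (Fin (n+1))) (j.succAbove b)
      (fun l => if l = j.succAbove a then (0:ℝ) else T (j.succAbove a) l)]
  have hsum : ∑ l : Fin (n+1), (if l = j.succAbove a then (0:ℝ) else T (j.succAbove a) l)
      = 1 - T (j.succAbove a) (j.succAbove a) := by
    have step : ∀ l : Fin (n+1), (if l = j.succAbove a then (0:ℝ) else T (j.succAbove a) l)
        = T (j.succAbove a) l - (if l = j.succAbove a then T (j.succAbove a) (j.succAbove a) else 0) := by
      intro l
      by_cases h : l = j.succAbove a <;> simp [h]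
    rw [Finset.sum_congr rfl fun l _ => step l, Finset.sum_sub_distrib, hrow,
      Finset.sum_ite_eq' (Finset.univ : Finset (Fin (n+1))) (j.succAbove a)
        (fun _ => T (j.succAbove a) (j.succAbove a))]
    simp
  rw [hsum]
  rcases eq_or_ne a b with rfl | hab
  · simp
  · have h1 : ¬ j.succAbove a = j.succAbove b := fun h => hab (Fin.succAbove_right_injective h)
    have h2 : ¬ j.succAbove b = j.succAbove a := fun h => hab (Fin.succAbove_right_injective h).symm
    simp [hab, h1, h2]

lemma det_minor_expand {n : ℕ} (T : Matrix (Fin (n+1)) (Fin (n+1)) ℝ)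
    (hrow : ∀ i, ∑ l, T i l = 1) (j : Fin (n+1)) :
    ((1 - T).submatrix j.succAbove j.succAbove).det
      = ∑ r : Fin n → Fin (n+1), (∏ a, cf T j a (r a)) * (1 - Pmat j r).det := by
  set f := (Matrix.detRowAlternating (R := ℝ) (n := Fin n)).toMultilinearMap with hf
  have h1 : ((1 - T).submatrix j.succAbove j.succAbove).det
      = f (fun a => ∑ l : Fin (n+1), cf T j a l • vrow j a l) := by
    rw [← rows_expand T hrow j]
    rfl
  rw [h1, f.map_sum (g := fun (a : Fin n) (l : Fin (n+1)) => cf T j a l • vrow j a l)]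
  apply Finset.sum_congr rfl
  intro r _
  rw [f.map_smul_univ (fun a => cf T j a (r a)) (fun a => vrow j a (r a))]
  have h4 : f (fun a => vrow j a (r a)) = (1 - Pmat j r).det := by
    rw [one_sub_Pmat_rows j r]
    rfl
  rw [h4, smul_eq_mul]


noncomputable def Fr {n : ℕ} (j : Fin (n+1)) (r : Fin n → Fin (n+1)) :
    Fin (n+1) → Option (Fin (n+1)) :=
  fun v => (finSuccEquiv' j v).map r

lemma Fr_at {n : ℕ} (j : Fin (n+1)) (r : Fin n → Fin (n+1)) : Fr j r j = none := by
  simp [Fr, finSuccEquiv'_at]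

lemma Fr_succAbove {n : ℕ} (j : Fin (n+1)) (r : Fin n → Fin (n+1)) (a : Fin n) :
    Fr j r (j.succAbove a) = some (r a) := by
  simp [Fr, finSuccEquiv'_succAbove]

lemma step_ne_j {n : ℕ} {j : Fin (n+1)} {r : Fin n → Fin (n+1)} {v u : Fin (n+1)}
    (h : Step (Fr j r) v u) : v ≠ j := by
  rintro rfl
  rw [Step, Fr_at] at h
  exact Option.some_ne_none _ h.symm

lemma transGen_lift {n : ℕ} {j : Fin (n+1)} {r : Fin n → Fin (n+1)} {a b : Fin n}
    (h : Relation.TransGen (relR j r) a b) :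
    Relation.TransGen (Step (Fr j r)) (j.succAbove a) (j.succAbove b) :=
  Relation.TransGen.lift (r := relR j r) (p := Step (Fr j r)) j.succAbove
    (fun a b hab => show Fr j r (j.succAbove a) = some (j.succAbove b) by
      rw [Fr_succAbove, hab]) _ _ h

lemma transGen_back {n : ℕ} {j : Fin (n+1)} {r : Fin n → Fin (n+1)} {v w : Fin (n+1)}
    (h : Relation.TransGen (Step (Fr j r)) v w) :
    ∀ a b, v = j.succAbove a → w = j.succAbove b → Relation.TransGen (relR j r) a b := by
  induction h with
  | single hstep =>
    rintro a b rfl rfl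
    rw [Step, Fr_succAbove] at hstep
    exact Relation.TransGen.single (Option.some_injective _ hstep)
  | @tail w' w'' hvw hstep ih =>
    rintro a b rfl rfl
    have hne : w' ≠ j := step_ne_j hstep
    obtain ⟨c, rfl⟩ := Fin.exists_succAbove_eq hne
    refine Relation.TransGen.tail (ih a c rfl rfl) ?_
    rw [Step, Fr_succAbove] at hstep
    exact Option.some_injective _ hstep

lemma step_cycle {n : ℕ} {j : Fin (n+1)} {r : Fin n → Fin (n+1)} {v : Fin (n+1)}
    (h : Relation.TransGen (Step (Fr j r)) v v) :
    ∃ a, Relation.TransGen (relR j r) a a := by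
  have hne : v ≠ j := by
    obtain ⟨u, hu, -⟩ := Relation.TransGen.head'_iff.mp h
    exact step_ne_j hu
  obtain ⟨a, rfl⟩ := Fin.exists_succAbove_eq hne
  exact ⟨a, transGen_back h a a rfl rfl⟩

lemma arcCount_Fr {n : ℕ} (j : Fin (n+1)) (r : Fin n → Fin (n+1)) :
    arcCount (Fr j r) = n := by
  rw [arcCount]
  have : Finset.univ.filter (fun v => (Fr j r v).isSome) = Finset.univ.erase j := by
    ext v
    simp only [Finset.mem_filter, Finset.mem_univ, true_and, Finset.mem_erase, and_true]
    constructor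
    · intro hs
      rintro rfl
      rw [Fr_at] at hs
      simp at hs
    · intro hne
      obtain ⟨a, rfl⟩ := Fin.exists_succAbove_eq hne
      rw [Fr_succAbove]
      rfl
  rw [this, Finset.card_erase_of_mem (Finset.mem_univ j), Finset.card_univ, Fintype.card_fin]
  omega

lemma forestWeight_Fr {n : ℕ} (T : Matrix (Fin (n+1)) (Fin (n+1)) ℝ) (j : Fin (n+1))
    (r : Fin n → Fin (n+1)) :
    forestWeight T (Fr j r) = ∏ a, T (j.succAbove a) (r a) := by
  rw [forestWeight, Fin.prod_univ_succAbove _ j, Fr_at]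
  simp only [Option.elim_none, one_mul]
  apply Finset.prod_congr rfl
  intro a _
  rw [Fr_succAbove]
  rfl

lemma term_eq {n : ℕ} (T : Matrix (Fin (n+1)) (Fin (n+1)) ℝ) (hS : IsStochastic T)
    (j : Fin (n+1)) (r : Fin n → Fin (n+1)) :
    (if IsInForest T (Fr j r) ∧ arcCount (Fr j r) = (n+1) - 1 ∧ (Fr j r) j = none
       then forestWeight T (Fr j r) else 0)
    = (∏ a, cf T j a (r a)) * (1 - Pmat j r).det := by
  by_cases hA : ∀ a, ¬ Relation.TransGen (relR j r) a a
  · rw [det_acyclic j r hA, mul_one]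
    by_cases hgood : ∀ a, r a ≠ j.succAbove a ∧ 0 < T (j.succAbove a) (r a)
    · rw [if_pos, forestWeight_Fr]
      · apply Finset.prod_congr rfl
        intro a _
        rw [cf, if_neg (hgood a).1]
      · refine ⟨⟨?_, ?_⟩, ?_, Fr_at j r⟩
        · intro v u hvu
          have hne : v ≠ j := by
            rintro rfl; rw [Fr_at] at hvu; exact Option.some_ne_none _ hvu.symm
          obtain ⟨a, rfl⟩ := Fin.exists_succAbove_eq hne
          rw [Fr_succAbove] at hvu
          obtain rfl := Option.some_injective _ hvu
          exact ⟨fun h => (hgood a).1 h.symm, (hgood a).2⟩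
        · intro v hv
          obtain ⟨a, ha⟩ := step_cycle hv
          exact hA a ha
        · rw [arcCount_Fr]; omega
    · push_neg at hgood
      obtain ⟨a, ha⟩ := hgood
      have hzero : cf T j a (r a) = 0 := by
        rw [cf]
        by_cases h : r a = j.succAbove a
        · rw [if_pos h]
        · rw [if_neg h]
          have := ha h
          have h2 := (hS.1 (j.succAbove a) (r a))
          linarith
      rw [Finset.prod_eq_zero (Finset.mem_univ a) hzero, if_neg]
      rintro ⟨hF, -, -⟩
      have h1 := hF.1 (j.succAbove a) (r a) (Fr_succAbove j r a)
      exact absurd h1.2 (not_lt.mpr (ha (fun h => h1.1 h.symm)))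
  · push_neg at hA
    obtain ⟨a₀, hc⟩ := hA
    rw [det_cycle j r a₀ hc, mul_zero, if_neg]
    rintro ⟨hF, -, -⟩
    exact hF.2 (j.succAbove a₀) (transGen_lift hc)

lemma Fr_injective {n : ℕ} (j : Fin (n+1)) : Function.Injective (Fr j) := by
  intro r r' h
  funext a
  have := congrFun h (j.succAbove a)
  rw [Fr_succAbove, Fr_succAbove] at this
  exact Option.some_injective _ this

lemma treeWeight_eq_sum {n : ℕ} (T : Matrix (Fin (n+1)) (Fin (n+1)) ℝ) (j : Fin (n+1)) :
    treeWeight T j = ∑ r : Fin n → Fin (n+1),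
      (if IsInForest T (Fr j r) ∧ arcCount (Fr j r) = (n+1) - 1 ∧ (Fr j r) j = none
        then forestWeight T (Fr j r) else 0) := by
  rw [treeWeight]
  have himg := Finset.sum_image (s := (Finset.univ : Finset (Fin n → Fin (n+1)))) (g := Fr j)
      (f := fun F => if IsInForest T F ∧ arcCount F = (n+1) - 1 ∧ F j = none
        then forestWeight T F else 0)
      (fun r _ r' _ h => Fr_injective j h)
  rw [← himg]
  refine (Finset.sum_subset (Finset.subset_univ _) ?_).symm
  intro F _ hFim
  rw [if_neg]
  rintro ⟨hF, hcnt, hnone⟩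
  apply hFim
  rw [Finset.mem_image]
  have hsome : ∀ v, v ≠ j → (F v).isSome := by
    have hfilter : Finset.univ.filter (fun v => (F v).isSome) = Finset.univ.erase j := by
      apply Finset.eq_of_subset_of_card_le
      · intro v hv
        simp only [Finset.mem_filter, Finset.mem_univ, true_and] at hv
        simp only [Finset.mem_erase, Finset.mem_univ, and_true]
        rintro rfl
        rw [hnone] at hv
        simp at hv
      · have h1 : (Finset.univ.erase j).card = n := by
          rw [Finset.card_erase_of_mem (Finset.mem_univ j), Finset.card_univ, Fintype.card_fin]
          omega
        have h2 : (Finset.univ.filter (fun v => (F v).isSome)).card = n := by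
          unfold arcCount at hcnt
          omega
        omega
    intro v hv
    have : v ∈ Finset.univ.filter (fun v => (F v).isSome) := by
      rw [hfilter]
      simp [hv]
    simpa using this
  refine ⟨fun a => ((F (j.succAbove a)).get (hsome _ (Fin.succAbove_ne j a))),
    Finset.mem_univ _, ?_⟩
  funext v
  rcases eq_or_ne v j with rfl | hv
  · rw [Fr_at, hnone]
  · obtain ⟨a, rfl⟩ := Fin.exists_succAbove_eq hv
    rw [Fr_succAbove, Option.some_get]

lemma Tpow_nonneg {n : ℕ} {T : Matrix (Fin (n+1)) (Fin (n+1)) ℝ} (hS : IsStochastic T) :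
    ∀ (k : ℕ) (i l : Fin (n+1)), 0 ≤ (T ^ k) i l := by
  intro k
  induction k with
  | zero =>
    intro i l
    rw [pow_zero, Matrix.one_apply]
    split <;> norm_num
  | succ k ih =>
    intro i l
    rw [pow_succ', Matrix.mul_apply]
    exact Finset.sum_nonneg fun u _ => mul_nonneg (hS.1 i u) (ih u l)

lemma treeWeight_pos {n : ℕ} (T : Matrix (Fin (n+1)) (Fin (n+1)) ℝ)
    (hS : IsStochastic T) (hIrr : IsIrreducible T) (j : Fin (n+1)) :
    0 < treeWeight T j := by
  -- construct an explicit spanning converging tree using shortest positive paths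
  have hex : ∀ i : Fin (n+1), ∃ k : ℕ, 0 < (T ^ k) i j := fun i => hIrr i j
  set d : Fin (n+1) → ℕ := fun i => Nat.find (hex i) with hd
  have hstep : ∀ i, i ≠ j → ∃ u, 0 < T i u ∧ d u < d i := by
    intro i hij
    have hspec : 0 < (T ^ d i) i j := Nat.find_spec (hex i)
    have hd0 : d i ≠ 0 := by
      intro h0
      rw [h0, pow_zero, Matrix.one_apply_ne hij] at hspec
      exact lt_irrefl 0 hspec
    obtain ⟨m, hm⟩ := Nat.exists_eq_succ_of_ne_zero hd0
    rw [hm, pow_succ', Matrix.mul_apply] at hspec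
    have hterm : ∃ u, 0 < T i u * (T ^ m) u j := by
      by_contra hcon
      push_neg at hcon
      have : (∑ u, T i u * (T ^ m) u j) ≤ 0 := Finset.sum_nonpos fun u _ => hcon u
      linarith
    obtain ⟨u, hu⟩ := hterm
    have h1 : 0 < T i u := by
      rcases (hS.1 i u).lt_or_eq with h | h
      · exact h
      · rw [← h, zero_mul] at hu; exact absurd hu (lt_irrefl 0)
    have h2 : 0 < (T ^ m) u j := by
      rcases (Tpow_nonneg hS m u j).lt_or_eq with h | h
      · exact h
      · rw [← h, mul_zero] at hu; exact absurd hu (lt_irrefl 0)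
    refine ⟨u, h1, ?_⟩
    have : d u ≤ m := Nat.find_le h2
    omega
  set F₀ : Fin (n+1) → Option (Fin (n+1)) :=
    fun i => if h : i = j then none else some (Classical.choose (hstep i h)) with hF₀
  have hF₀j : F₀ j = none := by simp [hF₀]
  have hF₀arc : ∀ v u, F₀ v = some u → 0 < T v u ∧ d u < d v := by
    intro v u hvu
    rw [hF₀] at hvu
    simp only at hvu
    by_cases h : v = j
    · rw [dif_pos h] at hvu; exact absurd hvu.symm (Option.some_ne_none _)
    · rw [dif_neg h] at hvu
      obtain rfl := Option.some_injective _ hvu.symm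
      exact ⟨(Classical.choose_spec (hstep v h)).1, (Classical.choose_spec (hstep v h)).2⟩
  have hdec : ∀ v u, Relation.TransGen (Step F₀) v u → d u < d v := by
    intro v u h
    induction h with
    | single hs => exact (hF₀arc _ _ hs).2
    | tail hvw hs ih => exact lt_trans (hF₀arc _ _ hs).2 ih
  have hforest : IsInForest T F₀ := by
    constructor
    · intro v u hvu
      refine ⟨?_, (hF₀arc v u hvu).1⟩
      intro hEq
      have := (hF₀arc v u hvu).2
      rw [hEq] at this
      exact lt_irrefl _ this
    · intro v hv
      exact lt_irrefl _ (hdec v v hv)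
  have hcnt : arcCount F₀ = (n+1) - 1 := by
    rw [arcCount]
    have : Finset.univ.filter (fun v => (F₀ v).isSome) = Finset.univ.erase j := by
      ext v
      simp only [Finset.mem_filter, Finset.mem_univ, true_and, Finset.mem_erase, and_true]
      constructor
      · intro hs
        rintro rfl
        rw [hF₀j] at hs
        simp at hs
      · intro hne
        rw [hF₀]
        simp [dif_neg hne]
    rw [this, Finset.card_erase_of_mem (Finset.mem_univ j), Finset.card_univ, Fintype.card_fin]
  have hposF : ∀ (F : Fin (n+1) → Option (Fin (n+1))), IsInForest T F → 0 < forestWeight T F := by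
    intro F hF
    rw [forestWeight]
    apply Finset.prod_pos
    intro v _
    cases hFv : F v with
    | none => simp
    | some u =>
      simp only [Option.elim_some]
      exact (hF.1 v u hFv).2
  rw [treeWeight]
  apply Finset.sum_pos'
  · intro F _
    split
    · rename_i h
      exact le_of_lt (hposF F h.1)
    · exact le_refl 0
  · refine ⟨F₀, Finset.mem_univ _, ?_⟩
    rw [if_pos ⟨hforest, hcnt, hF₀j⟩]
    exact hposF F₀ hforest

end MFPT

namespace MFPT

/-- directed matrix-tree theorem for `L = I - T`. `q_j` equals the
`(j,j)` cofactor of `L` and is strictly positive. -/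
theorem treeWeight_eq_cofactor {n : ℕ} (T : Matrix (Fin (n + 1)) (Fin (n + 1)) ℝ)
    (hS : IsStochastic T) (hIrr : IsIrreducible T) :
    ∀ j, treeWeight T j =
        Matrix.det (((1 : Matrix (Fin (n + 1)) (Fin (n + 1)) ℝ) - T).submatrix
          j.succAbove j.succAbove) ∧
      0 < treeWeight T j := by
  intro j
  constructor
  · rw [treeWeight_eq_sum T j, det_minor_expand T hS.2 j]
    exact Finset.sum_congr rfl fun r _ => term_eq T hS j r
  · exact treeWeight_pos T hS hIrr j

end MFPT
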